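/- arXiv:1007.5224 — 7 statements merged into one kernel-verified Lean document; each statement's English description precedes it below -/
import Mathlib

section
/- Let T and A be bounded linear operators on a complex Hilbert space H. Then the set W₀(A) = {ε ∈ ℝ : there exists a sequence (xₙ) of unit vectors in H such that ‖Txₙ‖ → ‖T‖ and Re⟨Txₙ, Axₙ⟩ → ε} is a closed subset of ℝ. -/
open Filter Topology

/-- The set `W₀(A)` is closed. -/
theorem W0_isClosed {H : Type*} [NormedAddCommGroup H] [InnerProductSpace ℂ H]
    [CompleteSpace H] (T A : H →L[ℂ] H) :
    IsClosed {ε : ℝ | ∃ x : ℕ → H, (∀ n, ‖x n‖ = 1) ∧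
      Tendsto (fun n => ‖T (x n)‖) atTop (𝓝 ‖T‖) ∧
      Tendsto (fun n => (inner ℂ (T (x n)) (A (x n)) : ℂ).re) atTop (𝓝 ε)} := by
  apply IsSeqClosed.isClosed
  intro εs L hmem hlim
  choose x hx1 hx2 hx3 using hmem
  have key : ∀ k : ℕ, ∃ n : ℕ, dist ‖T (x k n)‖ ‖T‖ < 1/(k+1) ∧
      dist ((inner ℂ (T (x k n)) (A (x k n)) : ℂ).re) (εs k) < 1/(k+1) := by
    intro k
    obtain ⟨N1, hN1⟩ := Metric.tendsto_atTop.mp (hx2 k) (1/(k+1)) (by positivity)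
    obtain ⟨N2, hN2⟩ := Metric.tendsto_atTop.mp (hx3 k) (1/(k+1)) (by positivity)
    exact ⟨max N1 N2, hN1 _ (le_max_left _ _), hN2 _ (le_max_right _ _)⟩
  choose n hn1 hn2 using key
  refine ⟨fun k => x k (n k), fun k => hx1 k (n k), ?_, ?_⟩
  · rw [tendsto_iff_dist_tendsto_zero]
    exact squeeze_zero (fun k => dist_nonneg) (fun k => (hn1 k).le)
      tendsto_one_div_add_atTop_nhds_zero_nat
  · rw [tendsto_iff_dist_tendsto_zero]
    have hd : Tendsto (fun k => dist (εs k) L) atTop (𝓝 0) :=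
      tendsto_iff_dist_tendsto_zero.mp hlim
    have hg : Tendsto (fun k : ℕ => 1/((k:ℝ)+1) + dist (εs k) L) atTop (𝓝 0) := by
      simpa using tendsto_one_div_add_atTop_nhds_zero_nat.add hd
    refine squeeze_zero (fun k => dist_nonneg) (fun k => ?_) hg
    calc dist ((inner ℂ (T (x k (n k))) (A (x k (n k))) : ℂ).re) L
        ≤ dist ((inner ℂ (T (x k (n k))) (A (x k (n k))) : ℂ).re) (εs k) + dist (εs k) L :=
          dist_triangle _ _ _
      _ ≤ 1/((k:ℝ)+1) + dist (εs k) L := by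
          exact add_le_add (hn2 k).le le_rfl
end

section
/- Let T and A be bounded linear operators on a complex Hilbert space H. If there exists a sequence (xₙ) of unit vectors in H such that Re⟨Txₙ, Axₙ⟩ → 0 and ‖Txₙ‖ → ‖T‖, then ‖T‖ ≤ ‖T - εA‖ for all real scalars ε. -/
open Filter Topology

/-- If there is a sequence of unit vectors `xₙ` with `Re⟨Txₙ, Axₙ⟩ → 0` and `‖Txₙ‖ → ‖T‖`,
then `T` is real orthogonal to `A`. -/
theorem real_orthogonal_of_seq {H : Type*} [NormedAddCommGroup H] [InnerProductSpace ℂ H]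
    [CompleteSpace H] (T A : H →L[ℂ] H)
    (h : ∃ x : ℕ → H, (∀ n, ‖x n‖ = 1) ∧
      Tendsto (fun n => (inner ℂ (T (x n)) (A (x n)) : ℂ).re) atTop (𝓝 0) ∧
      Tendsto (fun n => ‖T (x n)‖) atTop (𝓝 ‖T‖)) :
    ∀ ε : ℝ, ‖T‖ ≤ ‖T - (ε : ℂ) • A‖ := by
  intro ε
  obtain ⟨x, hx, hre, hnorm⟩ := h
  have key : ‖T‖ ^ 2 ≤ ‖T - (ε : ℂ) • A‖ ^ 2 := by
    have hlim : Tendsto (fun n => ‖T (x n)‖ ^ 2 -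
        2 * ε * (inner ℂ (T (x n)) (A (x n)) : ℂ).re) atTop (𝓝 (‖T‖ ^ 2)) := by
      have := (hnorm.pow 2).sub ((hre.const_mul (2 * ε)))
      simpa [mul_zero, mul_comm, mul_assoc] using this
    refine le_of_tendsto hlim (Filter.Eventually.of_forall fun n => ?_)
    have h1 : ‖(T - (ε : ℂ) • A) (x n)‖ ≤ ‖T - (ε : ℂ) • A‖ := by
      calc ‖(T - (ε : ℂ) • A) (x n)‖ ≤ ‖T - (ε : ℂ) • A‖ * ‖x n‖ :=
            (T - (ε : ℂ) • A).le_opNorm (x n)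
        _ = ‖T - (ε : ℂ) • A‖ := by rw [hx n, mul_one]
    have h2 : ‖(T - (ε : ℂ) • A) (x n)‖ ^ 2 =
        ‖T (x n)‖ ^ 2 - 2 * (Complex.re (inner ℂ (T (x n)) ((ε : ℂ) • A (x n)))) +
          ‖(ε : ℂ) • A (x n)‖ ^ 2 := by
      simp only [ContinuousLinearMap.sub_apply, ContinuousLinearMap.smul_apply]
      exact @norm_sub_sq ℂ _ _ _ _ (T (x n)) ((ε : ℂ) • A (x n))
    have h3 : Complex.re (inner ℂ (T (x n)) ((ε : ℂ) • A (x n)) : ℂ) =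
        ε * (inner ℂ (T (x n)) (A (x n)) : ℂ).re := by
      rw [inner_smul_right]
      simp [Complex.ofReal_mul, Complex.mul_re]
    calc ‖T (x n)‖ ^ 2 - 2 * ε * (inner ℂ (T (x n)) (A (x n)) : ℂ).re
        ≤ ‖T (x n)‖ ^ 2 - 2 * ε * (inner ℂ (T (x n)) (A (x n)) : ℂ).re +
          ‖(ε : ℂ) • A (x n)‖ ^ 2 := le_add_of_nonneg_right (by positivity)
      _ = ‖(T - (ε : ℂ) • A) (x n)‖ ^ 2 := by rw [h2, h3]; ring
      _ ≤ ‖T - (ε : ℂ) • A‖ ^ 2 := by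
          exact pow_le_pow_left₀ (norm_nonneg _) h1 2
  exact (pow_le_pow_iff_left₀ (norm_nonneg _) (norm_nonneg _) two_ne_zero).mp key
end

section
/- Let T and A be bounded linear operators on a nontrivial complex Hilbert space H. If ‖T‖ ≤ ‖T - εA‖ for all real scalars ε, then there exists a sequence (xₙ) of unit vectors in H such that Re⟨Txₙ, Axₙ⟩ → 0 and ‖Txₙ‖ → ‖T‖. -/
open Filter Topology
open scoped InnerProductSpace
open Set

section Aux
variable {H : Type*} [NormedAddCommGroup H] [InnerProductSpace ℂ H]

lemma expand_sq (ε : ℝ) (u v : H) :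
    ‖u - (ε:ℂ) • v‖^2 = ‖u‖^2 - 2*ε*(inner ℂ u v : ℂ).re + ε^2*‖v‖^2 := by
  have := norm_sub_sq (𝕜 := ℂ) u ((ε:ℂ) • v)
  simp only [inner_smul_right, norm_smul, Complex.norm_real, Real.norm_eq_abs,
    RCLike.re_to_complex] at this
  rw [this, Complex.mul_re]
  simp only [Complex.ofReal_re, Complex.ofReal_im]
  rw [mul_pow, sq_abs]; ring

lemma exists_unit_norm_approx [Nontrivial H] (S : H →L[ℂ] H) {δ : ℝ} (hδ : 0 < δ) :
    ∃ x : H, ‖x‖ = 1 ∧ ‖S‖ - δ ≤ ‖S x‖ := by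
  by_contra hc
  push_neg at hc
  obtain ⟨v, hv⟩ := exists_ne (0 : H)
  set u : H := ((‖v‖⁻¹ : ℝ):ℂ) • v with hu
  have hnu : ‖u‖ = 1 := by
    rw [hu, norm_smul]
    simp [norm_inv, abs_of_nonneg (norm_nonneg v), inv_mul_cancel₀ (norm_ne_zero_iff.2 hv)]
  have h0 : 0 ≤ ‖S‖ - δ := by
    have := hc u hnu
    have := norm_nonneg (S u)
    linarith
  have : ‖S‖ ≤ ‖S‖ - δ := by
    apply S.opNorm_le_bound h0
    intro x
    rcases eq_or_ne x 0 with rfl | hx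
    · simp
    · set w : H := ((‖x‖⁻¹ : ℝ):ℂ) • x with hw
      have hnw : ‖w‖ = 1 := by
        rw [hw, norm_smul]
        simp [abs_of_nonneg (norm_nonneg x), inv_mul_cancel₀ (norm_ne_zero_iff.2 hx)]
      have := (hc w hnw).le
      have hSw : ‖S w‖ = ‖x‖⁻¹ * ‖S x‖ := by
        rw [hw, map_smul, norm_smul]
        simp [abs_of_nonneg (norm_nonneg x)]
      rw [hSw] at this
      have hxpos : (0:ℝ) < ‖x‖ := norm_pos_iff.2 hx
      calc ‖S x‖ = ‖x‖ * (‖x‖⁻¹ * ‖S x‖) := by field_simp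
        _ ≤ ‖x‖ * (‖S‖ - δ) := by exact mul_le_mul_of_nonneg_left this hxpos.le
        _ = (‖S‖ - δ) * ‖x‖ := by ring
  linarith

lemma exists_phase (c d : ℂ) : ∃ u : ℂ, ‖u‖ = 1 ∧ (u * c).re ≤ 0 ∧ 0 ≤ (u * d).re := by
  by_cases hc : c = 0
  · by_cases hd : d = 0
    · exact ⟨1, by simp, by simp [hc], by simp [hd]⟩
    · refine ⟨(starRingEnd ℂ) d / (‖d‖:ℂ), ?_, by simp [hc], ?_⟩
      · rw [norm_div]
        simp only [RCLike.norm_conj, Complex.norm_real, Real.norm_eq_abs,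
          abs_of_nonneg (norm_nonneg d)]
        exact div_self (norm_ne_zero_iff.2 hd)
      · rw [div_mul_eq_mul_div, mul_comm, Complex.mul_conj']
        have hdn : (0:ℝ) < ‖d‖ := norm_pos_iff.2 hd
        have hne : ((‖d‖:ℝ):ℂ) ≠ 0 := by
          simpa using hdn.ne'
        rw [show ((‖d‖:ℂ))^2 / (‖d‖:ℂ) = ((‖d‖:ℝ):ℂ) by
          rw [sq, mul_div_assoc, div_self hne, mul_one]]
        simp [hdn.le]
  · set u₀ : ℂ := -((starRingEnd ℂ) c / (‖c‖:ℂ)) with hu₀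
    have hcn : (0:ℝ) < ‖c‖ := norm_pos_iff.2 hc
    have hne : ((‖c‖:ℝ):ℂ) ≠ 0 := by simpa using hcn.ne'
    have hn : ‖u₀‖ = 1 := by
      rw [hu₀, norm_neg, norm_div]
      simp only [RCLike.norm_conj, Complex.norm_real, Real.norm_eq_abs,
        abs_of_nonneg (norm_nonneg c)]
      exact div_self (norm_ne_zero_iff.2 hc)
    have huc : u₀ * c = -((‖c‖:ℝ):ℂ) := by
      rw [hu₀, neg_mul, div_mul_eq_mul_div, mul_comm, Complex.mul_conj']
      rw [sq, mul_div_assoc, div_self hne, mul_one]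
    rcases le_or_gt 0 (u₀ * d).re with h1 | h1
    · exact ⟨u₀, hn, by rw [huc]; simp [hcn.le], h1⟩
    · rcases le_or_gt 0 (Complex.I * u₀ * d).re with h2 | h2
      · refine ⟨Complex.I * u₀, by simp [hn], ?_, h2⟩
        rw [mul_assoc, huc]
        simp
      · refine ⟨-Complex.I * u₀, by simp [hn], ?_, ?_⟩
        · rw [mul_assoc, huc]; simp
        · have heq : (-Complex.I * u₀ * d).re = -(Complex.I * u₀ * d).re := by
            have : -Complex.I * u₀ * d = -(Complex.I * u₀ * d) := by ring
            rw [this, Complex.neg_re]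
          rw [heq]; linarith

lemma norm_combo_sq (a b : ℝ) (p q : H) :
    ‖(a:ℂ) • p + (b:ℂ) • q‖^2
      = a^2*‖p‖^2 + 2*a*b*(inner ℂ p q : ℂ).re + b^2*‖q‖^2 := by
  have := norm_add_sq (𝕜 := ℂ) ((a:ℂ) • p) ((b:ℂ) • q)
  simp only [inner_smul_left, inner_smul_right, norm_smul, Complex.norm_real,
    Real.norm_eq_abs, RCLike.re_to_complex, Complex.conj_ofReal] at this
  rw [this, ← mul_assoc, ← Complex.ofReal_mul, Complex.mul_re]
  simp only [Complex.ofReal_re, Complex.ofReal_im]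
  rw [mul_pow, mul_pow, sq_abs, sq_abs]; ring

set_option maxHeartbeats 1000000 in
lemma step [Nontrivial H] (T A : H →L[ℂ] H) (h : ∀ ε : ℝ, ‖T‖ ≤ ‖T - (ε : ℂ) • A‖)
    {ε : ℝ} (hε : 0 < ε) (hε1 : ε ≤ 1) {s : ℝ} (hs : s^2 = 1) :
    ∃ x : H, ‖x‖ = 1 ∧ s * (inner ℂ (T x) (A x) : ℂ).re ≤ ε*(‖T‖ + ‖A‖^2/2) ∧
      ‖T‖^2 - ε*(2*‖T‖ + 2*‖T‖*‖A‖ + ‖A‖^2) ≤ ‖T x‖^2 := by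
  set M := ‖T‖ with hM
  set a := ‖A‖ with ha
  have hM0 : 0 ≤ M := norm_nonneg T
  have ha0 : 0 ≤ a := norm_nonneg A
  set S := T - ((s*ε : ℝ):ℂ) • A with hS
  obtain ⟨x, hx1, hx2⟩ := exists_unit_norm_approx S (show (0:ℝ) < ε^2 by positivity)
  have hSn : M ≤ ‖S‖ := h (s*ε)
  have hSx : M - ε^2 ≤ ‖S x‖ := by linarith
  have hexp : ‖S x‖^2 = ‖T x‖^2 - 2*(s*ε)*(inner ℂ (T x) (A x) : ℂ).re
      + (s*ε)^2*‖A x‖^2 := by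
    rw [hS]
    exact expand_sq (s*ε) (T x) (A x)
  have hTx : ‖T x‖ ≤ M := by
    have := T.le_opNorm x
    rw [hx1] at this; simpa using this
  have hAx : ‖A x‖ ≤ a := by
    have := A.le_opNorm x
    rw [hx1] at this; simpa using this
  have hri : |(inner ℂ (T x) (A x) : ℂ).re| ≤ M * a := by
    calc |(inner ℂ (T x) (A x) : ℂ).re| ≤ ‖(inner ℂ (T x) (A x) : ℂ)‖ := Complex.abs_re_le_norm _
      _ ≤ ‖T x‖ * ‖A x‖ := norm_inner_le_norm _ _
      _ ≤ M * a := mul_le_mul hTx hAx (norm_nonneg _) hM0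
  have hSx2 : M^2 - 2*ε^2*M ≤ ‖S x‖^2 := by
    rcases le_or_gt (ε^2) M with hle | hlt
    · nlinarith [hSx, sq_nonneg ε]
    · have h1 : M*M ≤ ε^2*M := mul_le_mul_of_nonneg_right hlt.le hM0
      nlinarith [sq_nonneg (‖S x‖), mul_nonneg (sq_nonneg ε) hM0]
  have hr := abs_le.mp hri
  have hTx0 : 0 ≤ ‖T x‖ := norm_nonneg _
  have hAx0 : 0 ≤ ‖A x‖ := norm_nonneg _
  have hse : (s*ε)^2 = ε^2 := by rw [mul_pow, hs, one_mul]
  rw [hexp, hse] at hSx2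
  set r := (inner ℂ (T x) (A x) : ℂ).re with hrr
  have hs' : s = 1 ∨ s = -1 := by
    have h0 : (s - 1) * (s + 1) = 0 := by nlinarith
    rcases mul_eq_zero.mp h0 with h1 | h1
    · left; linarith
    · right; linarith
  have hsr : -(M*a) ≤ s * r ∧ s * r ≤ M * a := by
    rcases hs' with rfl | rfl
    · constructor <;> [linarith [hr.1]; linarith [hr.2]]
    · constructor <;> [nlinarith [hr.2]; nlinarith [hr.1]]
  have hee : ε^2 ≤ ε := by nlinarith
  have hTx2 : ‖T x‖^2 ≤ M^2 := by nlinarith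
  have hAx2 : ‖A x‖^2 ≤ a^2 := by nlinarith
  refine ⟨x, hx1, ?_, ?_⟩
  · -- s * rx ≤ ε*(M + a²/2)
    have h2 : 2*ε*(s*r) ≤ 2*ε*(ε*(M + a^2/2)) := by nlinarith [sq_nonneg ε, mul_nonneg (sq_nonneg ε) hM0]
    exact le_of_mul_le_mul_left h2 (by positivity)
  · have e1 : -(2*ε*(M*a)) ≤ 2*ε*(s*r) := by nlinarith [hsr.1]
    have e2 : ε^2*‖A x‖^2 ≤ ε*a^2 := by nlinarith [sq_nonneg (‖A x‖), mul_nonneg (sq_nonneg ε) (sq_nonneg a)]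
    have e3 : ε^2*M ≤ ε*M := by nlinarith
    nlinarith [hSx2]

set_option maxHeartbeats 2000000 in
lemma combine (T A : H →L[ℂ] H) {η : ℝ} (hη : 0 < η) {x y : H}
    (hx : ‖x‖ = 1) (hy : ‖y‖ = 1)
    (hrx : -η ≤ (inner ℂ (T x) (A x) : ℂ).re)
    (hry : (inner ℂ (T y) (A y) : ℂ).re ≤ η)
    (hTx : ‖T‖^2 - ‖T x‖^2 ≤ η) (hTy : ‖T‖^2 - ‖T y‖^2 ≤ η) :
    ∃ z : H, ‖z‖ = 1 ∧ |(inner ℂ (T z) (A z) : ℂ).re| ≤ η ∧ ‖T‖^2 - ‖T z‖^2 ≤ 2*η := by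
  rcases le_or_gt ((inner ℂ (T x) (A x) : ℂ).re) η with hle | hgt
  · exact ⟨x, hx, abs_le.2 ⟨hrx, hle⟩, by linarith⟩
  set M := ‖T‖ with hM
  have hM0 : 0 ≤ M := norm_nonneg T
  obtain ⟨u, hu1, huc, hud⟩ := exists_phase
    (((M^2 : ℝ):ℂ) * (inner ℂ x y : ℂ) - (inner ℂ (T x) (T y) : ℂ)) (inner ℂ x y : ℂ)
  set y' : H := u • y with hy'def
  have hy'1 : ‖y'‖ = 1 := by rw [hy'def, norm_smul, hu1, hy, one_mul]
  have hconj : (starRingEnd ℂ) u * u = 1 := by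
    rw [mul_comm, Complex.mul_conj']
    rw [hu1]; norm_num
  have hAy' : (inner ℂ (T y') (A y') : ℂ) = inner ℂ (T y) (A y) := by
    rw [hy'def, map_smul, map_smul, inner_smul_left, inner_smul_right, ← mul_assoc, hconj,
      one_mul]
  have hTy'n : ‖T y'‖ = ‖T y‖ := by
    rw [hy'def, map_smul, norm_smul, hu1, one_mul]
  have hd' : 0 ≤ (inner ℂ x y' : ℂ).re := by
    rw [hy'def, inner_smul_right]; exact hud
  have hc' : (((M^2 : ℝ):ℂ) * (inner ℂ x y' : ℂ) - (inner ℂ (T x) (T y') : ℂ)).re ≤ 0 := by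
    rw [hy'def, inner_smul_right, map_smul, inner_smul_right]
    convert huc using 2
    ring
  -- the path
  set w : ℝ → H := fun t => ((1-t : ℝ):ℂ) • x + ((t : ℝ):ℂ) • y' with hw
  have hg : ∀ t, ‖w t‖^2
      = (1-t)^2 + 2*(1-t)*t*(inner ℂ x y' : ℂ).re + t^2 := by
    intro t
    rw [hw]
    have := norm_combo_sq (1-t) t x y'
    rw [this, hx, hy'1]; ring
  have hglb : ∀ t ∈ Icc (0:ℝ) 1, (1:ℝ)/2 ≤ ‖w t‖^2 := by
    intro t ht
    obtain ⟨ht0, ht1⟩ := ht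
    rw [hg]
    nlinarith [mul_nonneg (mul_nonneg (by linarith : (0:ℝ) ≤ 1-t) ht0) hd',
      sq_nonneg (1 - 2*t)]
  have hTw : ∀ t ∈ Icc (0:ℝ) 1, M^2 * ‖w t‖^2 - ‖T (w t)‖^2 ≤ η := by
    intro t ht
    obtain ⟨ht0, ht1⟩ := ht
    have hTwt : T (w t) = ((1-t : ℝ):ℂ) • T x + ((t : ℝ):ℂ) • T y' := by
      rw [hw]; simp [map_add, map_smul]
    have h2 : ‖T (w t)‖^2 = (1-t)^2*‖T x‖^2 + 2*(1-t)*t*(inner ℂ (T x) (T y') : ℂ).re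
        + t^2*‖T y'‖^2 := by
      rw [hTwt]; exact norm_combo_sq (1-t) t (T x) (T y')
    have hcre : M^2 * (inner ℂ x y' : ℂ).re - (inner ℂ (T x) (T y') : ℂ).re ≤ 0 := by
      have h := hc'
      rw [Complex.sub_re, Complex.mul_re, Complex.ofReal_re, Complex.ofReal_im,
        zero_mul, sub_zero] at h
      exact h
    have hTxM : M^2 - ‖T x‖^2 ≥ 0 := by
      have := T.le_opNorm x
      rw [hx, mul_one] at this
      nlinarith [norm_nonneg (T x)]
    have hTyM : M^2 - ‖T y'‖^2 ≥ 0 := by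
      have := T.le_opNorm y'
      rw [hy'1, mul_one] at this
      nlinarith [norm_nonneg (T y')]
    rw [hg, h2]
    have hTy2 : M^2 - ‖T y'‖^2 ≤ η := by rw [hTy'n]; exact hTy
    nlinarith [mul_nonneg (mul_nonneg (by linarith : (0:ℝ) ≤ 1-t) ht0)
      (neg_nonneg.mpr hcre), mul_nonneg (mul_nonneg (by linarith : (0:ℝ) ≤ 1-t) ht0) hη.le,
      sq_nonneg (1-t), sq_nonneg t]
  -- the function f
  set f : ℝ → ℝ := fun t => (inner ℂ (T (w t)) (A (w t)) : ℂ).re / ‖w t‖^2 with hf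
  have hwc : Continuous w := by
    rw [hw]; fun_prop
  have hfc : ContinuousOn f (Icc (0:ℝ) 1) := by
    apply ContinuousOn.div
    · exact (Complex.continuous_re.comp ((T.continuous.comp hwc).inner
        (A.continuous.comp hwc))).continuousOn
    · exact ((continuous_norm.comp hwc).pow 2).continuousOn
    · intro t ht
      have := hglb t ht
      exact ne_of_gt (by linarith)
  have hw0 : w 0 = x := by rw [hw]; simp
  have hw1 : w 1 = y' := by rw [hw]; simp
  have hf0 : f 0 = (inner ℂ (T x) (A x) : ℂ).re := by
    rw [hf]; simp only [hw0, hx]; norm_num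
  have hf1 : f 1 = (inner ℂ (T y) (A y) : ℂ).re := by
    rw [hf]; simp only [hw1, hy'1, hAy']; norm_num
  have hmem : η ∈ Icc (f 1) (f 0) := ⟨by rw [hf1]; exact hry, by rw [hf0]; exact hgt.le⟩
  obtain ⟨t, ht, hft⟩ := intermediate_value_Icc' (by norm_num : (0:ℝ) ≤ 1) hfc hmem
  set r : ℝ := ‖w t‖ with hr
  have hr2 : (1:ℝ)/2 ≤ r^2 := hglb t ht
  have hrpos : 0 < r := by
    rcases lt_or_eq_of_le (norm_nonneg (w t)) with h0 | h0
    · exact h0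
    · exfalso; rw [hr, ← h0] at hr2; norm_num at hr2
  set z : H := ((r⁻¹ : ℝ):ℂ) • w t with hz
  have hz1 : ‖z‖ = 1 := by
    rw [hz, norm_smul, Complex.norm_real, Real.norm_eq_abs, abs_of_nonneg (by positivity)]
    rw [← hr, inv_mul_cancel₀ hrpos.ne']
  have hrne : r ≠ 0 := hrpos.ne'
  have hinner : (inner ℂ (T z) (A z) : ℂ).re = f t := by
    have hfts : f t = (inner ℂ (T (w t)) (A (w t)) : ℂ).re / ‖w t‖^2 := by rw [hf]
    rw [hfts, hz, map_smul, map_smul, inner_smul_left, inner_smul_right, Complex.conj_ofReal,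
      ← mul_assoc, ← Complex.ofReal_mul, Complex.mul_re, Complex.ofReal_re, Complex.ofReal_im,
      zero_mul, sub_zero, ← hr, eq_div_iff (by positivity)]
    field_simp
  have hTz : ‖T z‖^2 = ‖T (w t)‖^2 / r^2 := by
    rw [hz, map_smul, norm_smul, Complex.norm_real, Real.norm_eq_abs,
      abs_of_nonneg (by positivity), mul_pow, inv_pow, inv_mul_eq_div]
  refine ⟨z, hz1, ?_, ?_⟩
  · rw [hinner, hft, abs_of_nonneg hη.le]
  · rw [hTz]
    have h1 := hTw t ht
    have hX : ‖T (w t)‖^2 / r^2 * r^2 = ‖T (w t)‖^2 := div_mul_cancel₀ _ (by positivity)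
    by_cases hcase : M^2 - ‖T (w t)‖^2 / r^2 ≤ 0
    · linarith
    · push_neg at hcase
      nlinarith [h1, hX, mul_le_mul_of_nonneg_left hr2 hcase.le]

set_option maxHeartbeats 1000000 in
lemma key_orth [Nontrivial H] (T A : H →L[ℂ] H) (h : ∀ ε : ℝ, ‖T‖ ≤ ‖T - (ε : ℂ) • A‖)
    {η : ℝ} (hη : 0 < η) :
    ∃ z : H, ‖z‖ = 1 ∧ |(inner ℂ (T z) (A z) : ℂ).re| ≤ η ∧ ‖T‖^2 - ‖T z‖^2 ≤ 2*η := by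
  set M := ‖T‖ with hM
  set a := ‖A‖ with ha
  have hM0 : 0 ≤ M := norm_nonneg T
  have ha0 : 0 ≤ a := norm_nonneg A
  set C : ℝ := 2*M + 2*M*a + a^2 + M + 1 with hC
  have hC0 : 0 < C := by nlinarith [mul_nonneg hM0 ha0, sq_nonneg a]
  set ε := min (η / C) 1 with hε
  have hε0 : 0 < ε := lt_min (div_pos hη hC0) one_pos
  have hε1 : ε ≤ 1 := min_le_right _ _
  have hεC : ε * C ≤ η := by
    have h1 : ε ≤ η / C := min_le_left _ _
    calc ε*C ≤ (η/C)*C := mul_le_mul_of_nonneg_right h1 hC0.le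
      _ = η := div_mul_cancel₀ _ hC0.ne'
  obtain ⟨y, hy1, hy2, hy3⟩ := step T A h hε0 hε1 (s := 1) (by norm_num)
  obtain ⟨x, hx1, hx2, hx3⟩ := step T A h hε0 hε1 (s := -1) (by norm_num)
  have bound1 : ε*(M + a^2/2) ≤ η := by
    nlinarith [mul_nonneg hε0.le (mul_nonneg hM0 ha0),
      mul_nonneg hε0.le hM0, mul_nonneg hε0.le (sq_nonneg a)]
  have bound2 : ε*(2*M + 2*M*a + a^2) ≤ η := by
    nlinarith [mul_nonneg hε0.le hM0,
      mul_nonneg hε0.le (mul_nonneg hM0 ha0), mul_nonneg hε0.le (sq_nonneg a)]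
  exact combine T A hη hx1 hy1 (by linarith) (by linarith) (by linarith) (by linarith)

end Aux

/-- If `T` is real orthogonal to `A`, then there is a sequence of unit vectors `xₙ` with
`Re⟨Txₙ, Axₙ⟩ → 0` and `‖Txₙ‖ → ‖T‖`. -/
theorem seq_of_real_orthogonal {H : Type*} [NormedAddCommGroup H] [InnerProductSpace ℂ H]
    [CompleteSpace H] [Nontrivial H] (T A : H →L[ℂ] H)
    (h : ∀ ε : ℝ, ‖T‖ ≤ ‖T - (ε : ℂ) • A‖) :
    ∃ x : ℕ → H, (∀ n, ‖x n‖ = 1) ∧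
      Tendsto (fun n => (inner ℂ (T (x n)) (A (x n)) : ℂ).re) atTop (𝓝 0) ∧
      Tendsto (fun n => ‖T (x n)‖) atTop (𝓝 ‖T‖) := by
  have H1 : ∀ n : ℕ, ∃ z : H, ‖z‖ = 1 ∧
      |(inner ℂ (T z) (A z) : ℂ).re| ≤ 1/((n:ℝ)+1) ∧
      ‖T‖^2 - ‖T z‖^2 ≤ 2*(1/((n:ℝ)+1)) :=
    fun n => key_orth T A h (by positivity)
  choose x hx h1 h2 using H1
  have hlim : Tendsto (fun n : ℕ => 1/((n:ℝ)+1)) atTop (𝓝 0) :=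
    tendsto_one_div_add_atTop_nhds_zero_nat
  refine ⟨x, hx, ?_, ?_⟩
  · exact squeeze_zero_norm (fun n => by simpa [Real.norm_eq_abs] using h1 n) hlim
  · have hub : ∀ n, ‖T (x n)‖ ≤ ‖T‖ := fun n => by
      have := T.le_opNorm (x n)
      rwa [hx n, mul_one] at this
    have hsq : Tendsto (fun n => ‖T (x n)‖^2) atTop (𝓝 (‖T‖^2)) := by
      apply tendsto_of_tendsto_of_tendsto_of_le_of_le
        (g := fun n : ℕ => ‖T‖^2 - 2*(1/((n:ℝ)+1))) (h := fun _ : ℕ => ‖T‖^2)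
      · have := tendsto_const_nhds (x := ‖T‖^2) (f := atTop (α := ℕ))
        have h2' := this.sub (hlim.const_mul 2)
        simpa using h2'
      · exact tendsto_const_nhds
      · intro n
        show ‖T‖^2 - 2*(1/((n:ℝ)+1)) ≤ ‖T (x n)‖^2
        linarith [h2 n]
      · intro n
        show ‖T (x n)‖^2 ≤ ‖T‖^2
        nlinarith [hub n, norm_nonneg (T (x n))]
    have hs := hsq.sqrt
    have e1 : (fun n => Real.sqrt (‖T (x n)‖^2)) = fun n => ‖T (x n)‖ := by
      funext n; exact Real.sqrt_sq (norm_nonneg _)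
    have e2 : Real.sqrt (‖T‖^2) = ‖T‖ := Real.sqrt_sq (norm_nonneg _)
    rwa [e1, e2] at hs
end

section
/- Let T and A be bounded linear operators on a nontrivial complex Hilbert space H, and suppose A is bounded below, i.e. there exists c > 0 such that ‖Ax‖ ≥ c‖x‖ for all x ∈ H (equivalently, 0 does not belong to the approximate point spectrum of A). If ε₀ is a real scalar such that ‖T‖ = ‖T - ε₀A‖ ≤ ‖T - εA‖ for all ε ∈ ℝ, then ε₀ = 0. -/
set_option maxHeartbeats 1000000 in
/-- If `A` is bounded below and `ε₀` is a real center of mass of `T` relative to `A` with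
`‖T‖ = ‖T - ε₀A‖`, then `ε₀ = 0`. -/
theorem real_center_of_mass_unique {H : Type*} [NormedAddCommGroup H] [InnerProductSpace ℂ H]
    [CompleteSpace H] [Nontrivial H] (T A : H →L[ℂ] H)
    (c : ℝ) (hc : 0 < c) (hA : ∀ x : H, c * ‖x‖ ≤ ‖A x‖) (ε₀ : ℝ)
    (h₁ : ‖T‖ = ‖T - (ε₀ : ℂ) • A‖)
    (h₂ : ∀ ε : ℝ, ‖T - (ε₀ : ℂ) • A‖ ≤ ‖T - (ε : ℂ) • A‖) :
    ε₀ = 0 := by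
  by_contra hne
  set μ : ℝ := ε₀ / 2 with hμdef
  have hμ : μ ≠ 0 := div_ne_zero hne two_ne_zero
  set S : H →L[ℂ] H := T - (μ : ℂ) • A with hS
  set m : ℝ := ‖T‖ with hm
  set K : ℝ := m ^ 2 - μ ^ 2 * c ^ 2 with hKdef
  have hK : ∀ x : H, ‖S x‖ ^ 2 ≤ K * ‖x‖ ^ 2 := by
    intro x
    have hpar := parallelogram_law_with_norm ℂ (S x) ((μ : ℂ) • A x)
    have hSx : S x = T x - (μ : ℂ) • A x := by
      simp [hS]
    have e1 : S x + (μ : ℂ) • A x = T x := by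
      rw [hSx]; abel
    have e2 : S x - (μ : ℂ) • A x = (T - (ε₀ : ℂ) • A) x := by
      have hε : (ε₀ : ℂ) = (μ : ℂ) + (μ : ℂ) := by
        push_cast [hμdef]; ring
      rw [hSx]
      simp [hε, add_smul]
      abel
    rw [e1, e2] at hpar
    have b1 : ‖T x‖ ≤ m * ‖x‖ := T.le_opNorm x
    have b2 : ‖(T - (ε₀ : ℂ) • A) x‖ ≤ m * ‖x‖ := by
      rw [h₁]; exact (T - (ε₀ : ℂ) • A).le_opNorm x
    have hb3 : ‖(μ : ℂ) • A x‖ * ‖(μ : ℂ) • A x‖ = μ ^ 2 * (‖A x‖ * ‖A x‖) := by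
      rw [norm_smul]
      have : ‖(μ : ℂ)‖ = |μ| := Complex.norm_real μ
      rw [this]
      have := sq_abs μ
      nlinarith [sq_abs μ]
    have hAx : c ^ 2 * (‖x‖ * ‖x‖) ≤ ‖A x‖ * ‖A x‖ := by
      have h := mul_self_le_mul_self (by positivity) (hA x)
      calc c ^ 2 * (‖x‖ * ‖x‖) = (c * ‖x‖) * (c * ‖x‖) := by ring
        _ ≤ ‖A x‖ * ‖A x‖ := h
    have hb4 : μ ^ 2 * (c ^ 2 * (‖x‖ * ‖x‖)) ≤ ‖(μ : ℂ) • A x‖ * ‖(μ : ℂ) • A x‖ := by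
      rw [hb3]
      exact mul_le_mul_of_nonneg_left hAx (sq_nonneg μ)
    have s1 : ‖T x‖ * ‖T x‖ ≤ (m * ‖x‖) * (m * ‖x‖) :=
      mul_self_le_mul_self (norm_nonneg _) b1
    have s2 : ‖(T - (ε₀ : ℂ) • A) x‖ * ‖(T - (ε₀ : ℂ) • A) x‖ ≤ (m * ‖x‖) * (m * ‖x‖) :=
      mul_self_le_mul_self (norm_nonneg _) b2
    rw [hKdef]
    nlinarith [hpar, s1, s2, hb4]
  obtain ⟨x₀, hx₀⟩ := exists_ne (0 : H)
  have hx₀n : 0 < ‖x₀‖ := norm_pos_iff.mpr hx₀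
  have hK0 : 0 ≤ K := by
    have h := hK x₀
    nlinarith [sq_nonneg ‖S x₀‖, mul_pos hx₀n hx₀n]
  have hSle : ‖S‖ ≤ Real.sqrt K := by
    apply ContinuousLinearMap.opNorm_le_bound _ (Real.sqrt_nonneg K)
    intro x
    have h1 : ‖S x‖ = Real.sqrt (‖S x‖ ^ 2) := (Real.sqrt_sq (norm_nonneg _)).symm
    rw [h1]
    calc Real.sqrt (‖S x‖ ^ 2) ≤ Real.sqrt (K * ‖x‖ ^ 2) := Real.sqrt_le_sqrt (hK x)
      _ = Real.sqrt K * ‖x‖ := by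
          rw [Real.sqrt_mul hK0, Real.sqrt_sq (norm_nonneg x)]
  have hmS : m ≤ ‖S‖ := h₁.le.trans (h₂ μ)
  have hmsqrt : m ≤ Real.sqrt K := le_trans hmS hSle
  have hm0 : 0 ≤ m := norm_nonneg T
  have hm2 : m ^ 2 ≤ K := by
    nlinarith [Real.sq_sqrt hK0, Real.sqrt_nonneg K]
  have hcontra : μ ^ 2 * c ^ 2 ≤ 0 := by rw [hKdef] at hm2; linarith
  have hpos : 0 < μ ^ 2 * c ^ 2 := by positivity
  linarith
end

section
/- Let T and A be the bounded linear operators on the real Hilbert space ℝ² defined by T(x, y) = (x, 0) and A(x, y) = (0, y). Then ‖T‖ = ‖T - A‖ = ‖T + A‖, and ‖T‖ ≤ ‖T - εA‖ for every real scalar ε; in particular the real center of mass of T relative to A is not unique. -/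
open Real

private lemma norm_pair (a b : ℝ) :
    ‖((WithLp.equiv 2 (Fin 2 → ℝ)).symm ![a, b])‖ = Real.sqrt (a ^ 2 + b ^ 2) := by
  rw [EuclideanSpace.norm_eq]
  simp [Fin.sum_univ_two, sq_abs, WithLp.equiv_symm_apply, PiLp.toLp_apply]

private lemma key (T A : EuclideanSpace ℝ (Fin 2) →L[ℝ] EuclideanSpace ℝ (Fin 2))
    (hT : ∀ v : EuclideanSpace ℝ (Fin 2), T v = ![v 0, 0])
    (hA : ∀ v : EuclideanSpace ℝ (Fin 2), A v = ![0, v 1]) (c : ℝ) :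
    ‖T - c • A‖ = max 1 |c| := by
  have happ : ∀ v : EuclideanSpace ℝ (Fin 2),
      ‖(T - c • A) v‖ = Real.sqrt ((v 0) ^ 2 + (c * v 1) ^ 2) := by
    intro v
    have : (T - c • A) v = (WithLp.equiv 2 (Fin 2 → ℝ)).symm ![v 0, -(c * v 1)] := by
      simp only [ContinuousLinearMap.sub_apply, ContinuousLinearMap.smul_apply, hT, hA]
      ext i
      fin_cases i <;> simp [PiLp.sub_apply, PiLp.smul_apply, WithLp.equiv_symm_apply, PiLp.toLp_apply, hT, hA]
    rw [this, norm_pair]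
    ring_nf
  apply le_antisymm
  · apply ContinuousLinearMap.opNorm_le_bound _ (le_trans zero_le_one (le_max_left 1 |c|))
    intro v
    rw [happ v, EuclideanSpace.norm_eq]
    have hv : ∑ i, ‖v i‖ ^ 2 = (v 0) ^ 2 + (v 1) ^ 2 := by
      simp [Fin.sum_univ_two, sq_abs]
    rw [hv, ← Real.sqrt_sq (le_trans zero_le_one (le_max_left 1 |c|)),
      ← Real.sqrt_mul (by positivity)]
    apply Real.sqrt_le_sqrt
    have h1 : (1 : ℝ) ≤ (max 1 |c|) ^ 2 := by
      nlinarith [le_max_left 1 |c|]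
    have h2 : c ^ 2 ≤ (max 1 |c|) ^ 2 := by
      have := le_max_right 1 |c|
      nlinarith [abs_nonneg c, sq_abs c]
    nlinarith [sq_nonneg (v 0), sq_nonneg (v 1), sq_nonneg (c * v 1), mul_pow c (v 1) 2]
  · rcases le_total |c| 1 with h | h
    · rw [max_eq_left h]
      have := (T - c • A).le_opNorm ((WithLp.equiv 2 (Fin 2 → ℝ)).symm ![1, 0])
      rw [happ, norm_pair] at this
      simpa [WithLp.equiv_symm_apply, PiLp.toLp_apply] using this
    · rw [max_eq_right h]
      have := (T - c • A).le_opNorm ((WithLp.equiv 2 (Fin 2 → ℝ)).symm ![0, 1])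
      rw [happ, norm_pair] at this
      simp only [WithLp.equiv_symm_apply, PiLp.toLp_apply, Matrix.cons_val_zero, Matrix.cons_val_one,
        Matrix.head_cons] at this
      have h0 : Real.sqrt (0 ^ 2 + (c * 1) ^ 2) = |c| := by
        simp [Real.sqrt_sq_eq_abs]
      have h1 : Real.sqrt (0 ^ 2 + 1 ^ 2) = 1 := by norm_num
      rw [h0, h1, mul_one] at this
      exact this

/-- For `T(x,y) = (x,0)` and `A(x,y) = (0,y)` on `ℝ²`, we have
`‖T‖ = ‖T - A‖ = ‖T + A‖` and `‖T‖ ≤ ‖T - εA‖` for all real `ε`; in particular the real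
center of mass of `T` relative to `A` is not unique. -/
theorem real_center_of_mass_not_unique
    (T A : EuclideanSpace ℝ (Fin 2) →L[ℝ] EuclideanSpace ℝ (Fin 2))
    (hT : ∀ v : EuclideanSpace ℝ (Fin 2), T v = ![v 0, 0])
    (hA : ∀ v : EuclideanSpace ℝ (Fin 2), A v = ![0, v 1]) :
    ‖T‖ = ‖T - A‖ ∧ ‖T‖ = ‖T + A‖ ∧ (∀ ε : ℝ, ‖T‖ ≤ ‖T - ε • A‖) ∧
      ¬ ∃! ε₀ : ℝ, ∀ ε : ℝ, ‖T - ε₀ • A‖ ≤ ‖T - ε • A‖ := by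
  have hkey := key T A hT hA
  have hT0 : ‖T‖ = 1 := by
    have e0 : T - (0 : ℝ) • A = T := by ext v; simp
    have := hkey 0
    rw [e0] at this
    simpa using this
  have hTA : ‖T - A‖ = 1 := by
    have := hkey 1
    simpa [one_smul] using this
  have hTpA : ‖T + A‖ = 1 := by
    have e1 : T - (-1 : ℝ) • A = T + A := by ext v; simp
    have := hkey (-1)
    rw [e1] at this
    simpa using this
  refine ⟨by rw [hT0, hTA], by rw [hT0, hTpA], ?_, ?_⟩
  · intro ε
    rw [hT0, hkey ε]
    exact le_max_left 1 |ε|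
  · rintro ⟨ε₀, _, huniq⟩
    have h0 : (0 : ℝ) = ε₀ := huniq 0 (by
      intro ε
      rw [hkey 0, hkey ε]
      simp [le_max_left])
    have h1 : (1 : ℝ) = ε₀ := huniq 1 (by
      intro ε
      rw [hkey 1, hkey ε]
      simp [le_max_left])
    rw [← h0] at h1
    norm_num at h1
end

section
/- Let T be the bounded linear operator on ℂ² given by the diagonal matrix diag(1, 1 + i). Then cos T, the infimum of Re⟨Tz, z⟩/(‖Tz‖·‖z‖) over all nonzero z ∈ ℂ², equals 1/√2. -/
lemma aux_cos_lb (s t : ℝ) (hs : 0 ≤ s) (ht : 0 ≤ t) (h : 0 < s + t) :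
    1 / Real.sqrt 2 ≤ (s + t) / (Real.sqrt (s + 2*t) * Real.sqrt (s + t)) := by
  have h2 : (0:ℝ) < s + 2*t := by linarith
  rw [div_le_div_iff₀ (Real.sqrt_pos.mpr two_pos)
      (mul_pos (Real.sqrt_pos.mpr h2) (Real.sqrt_pos.mpr h)), one_mul]
  have e1 : Real.sqrt (s+2*t) * Real.sqrt (s+t) = Real.sqrt ((s+2*t)*(s+t)) :=
    (Real.sqrt_mul h2.le _).symm
  have e2 : (s+t) * Real.sqrt 2 = Real.sqrt ((s+t)^2 * 2) := by
    rw [Real.sqrt_mul (by positivity), Real.sqrt_sq h.le]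
  rw [e1, e2]
  exact Real.sqrt_le_sqrt (by nlinarith)

/-- For `T = diag(1, 1+i)` on `ℂ²`, the first antieigenvalue
`cos T = inf_{z ≠ 0} Re⟨Tz, z⟩/(‖Tz‖‖z‖)` equals `1/√2`. -/
theorem cos_diag_one_one_add_I
    (T : EuclideanSpace ℂ (Fin 2) →L[ℂ] EuclideanSpace ℂ (Fin 2))
    (hT : ∀ z : EuclideanSpace ℂ (Fin 2), T z = ![z 0, (1 + Complex.I) * z 1]) :
    sInf {r : ℝ | ∃ z : EuclideanSpace ℂ (Fin 2), z ≠ 0 ∧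
        r = (inner ℂ (T z) z : ℂ).re / (‖T z‖ * ‖z‖)} = 1 / Real.sqrt 2 := by
  have hinner : ∀ z : EuclideanSpace ℂ (Fin 2),
      (inner ℂ (T z) z : ℂ).re = ‖z 0‖^2 + ‖z 1‖^2 := by
    intro z
    simp [PiLp.inner_apply, Fin.sum_univ_two, hT z, RCLike.inner_apply, Complex.mul_re,
      Complex.sq_norm, Complex.normSq_apply]
    ring
  have hTnorm : ∀ z : EuclideanSpace ℂ (Fin 2),
      ‖T z‖ = Real.sqrt (‖z 0‖^2 + 2*‖z 1‖^2) := by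
    intro z
    rw [EuclideanSpace.norm_eq, hT z]
    congr 1
    simp [Fin.sum_univ_two, norm_mul]
    have : ‖(1 + Complex.I)‖ ^ 2 = 2 := by
      rw [Complex.sq_norm, Complex.normSq_apply]
      norm_num
    rw [mul_pow, this]
  have hnorm : ∀ z : EuclideanSpace ℂ (Fin 2),
      ‖z‖ = Real.sqrt (‖z 0‖^2 + ‖z 1‖^2) := by
    intro z
    rw [EuclideanSpace.norm_eq]
    simp [Fin.sum_univ_two]
  set S := {r : ℝ | ∃ z : EuclideanSpace ℂ (Fin 2), z ≠ 0 ∧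
      r = (inner ℂ (T z) z : ℂ).re / (‖T z‖ * ‖z‖)} with hS
  have lb : ∀ r ∈ S, 1 / Real.sqrt 2 ≤ r := by
    rintro r ⟨z, hz, rfl⟩
    have hpos : 0 < ‖z 0‖^2 + ‖z 1‖^2 := by
      have h0 : 0 < ‖z‖ := norm_pos_iff.mpr hz
      rw [hnorm z] at h0
      exact (Real.sqrt_pos.mp h0)
    rw [hinner, hTnorm, hnorm]
    exact aux_cos_lb _ _ (by positivity) (by positivity) hpos
  have hw : (1 / Real.sqrt 2) ∈ S := by
    refine ⟨!₂[0, 1], ?_, ?_⟩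
    · intro h
      have := congrArg (fun v : EuclideanSpace ℂ (Fin 2) => v 1) h
      simp at this
    · have h0 : (!₂[(0:ℂ), 1] : EuclideanSpace ℂ (Fin 2)) 0 = 0 := rfl
      have h1 : (!₂[(0:ℂ), 1] : EuclideanSpace ℂ (Fin 2)) 1 = 1 := rfl
      rw [hinner, hTnorm, hnorm, h0, h1]
      norm_num
  refine le_antisymm (csInf_le ⟨1 / Real.sqrt 2, lb⟩ hw) (le_csInf ⟨_, hw⟩ lb)
end

section
/- Let T be the bounded linear operator on ℂ² given by the diagonal matrix diag(1, 1 + i). Then |cos| T, the infimum of |⟨Tz, z⟩|/(‖Tz‖·‖z‖) over all nonzero z ∈ ℂ², equals √(2√2 - 2). -/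
private lemma aux_eq_of_sq {a b : ℝ} (ha : 0 ≤ a) (hb : 0 ≤ b) (h : a^2 = b^2) : a = b := by
  nlinarith [sq_nonneg (a - b), sq_nonneg (a + b)]

private lemma aux_sqrt2_sq : Real.sqrt 2 ^ 2 = 2 := Real.sq_sqrt (by norm_num)
private lemma aux_sqrt2_ge : (1:ℝ) ≤ Real.sqrt 2 := by
  nlinarith [Real.sqrt_nonneg 2, aux_sqrt2_sq]
private lemma aux_sqrt2_le : Real.sqrt 2 ≤ 3/2 := by
  nlinarith [Real.sqrt_nonneg 2, aux_sqrt2_sq]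

private lemma aux_c_sq : Real.sqrt (2 * Real.sqrt 2 - 2) ^ 2 = 2 * Real.sqrt 2 - 2 :=
  Real.sq_sqrt (by nlinarith [aux_sqrt2_ge])

private lemma aux_ineq (s t : ℝ) (hs : 0 ≤ s) (ht : 0 ≤ t) :
    (2 * Real.sqrt 2 - 2) * ((s + 2*t) * (s + t)) ≤ (s + t)^2 + t^2 := by
  nlinarith [sq_nonneg ((Real.sqrt 2 - 1) * (s + t) - t), aux_sqrt2_sq]

private noncomputable def wvec : EuclideanSpace ℂ (Fin 2) :=
  WithLp.toLp 2 ![(Real.sqrt (2 * Real.sqrt 2 - 2) : ℂ), (Real.sqrt (2 - Real.sqrt 2) : ℂ)]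

private lemma wvec0 : wvec 0 = (Real.sqrt (2 * Real.sqrt 2 - 2) : ℂ) := rfl
private lemma wvec1 : wvec 1 = (Real.sqrt (2 - Real.sqrt 2) : ℂ) := rfl

private lemma wvec_s : Complex.normSq (wvec 0) = 2 * Real.sqrt 2 - 2 := by
  rw [wvec0, Complex.normSq_ofReal, ← pow_two, Real.sq_sqrt (by nlinarith [aux_sqrt2_ge])]
private lemma wvec_t : Complex.normSq (wvec 1) = 2 - Real.sqrt 2 := by
  rw [wvec1, Complex.normSq_ofReal, ← pow_two, Real.sq_sqrt (by nlinarith [aux_sqrt2_le])]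

private lemma wvec_ne : wvec ≠ 0 := by
  intro h
  have h0 : wvec 0 = 0 := by rw [h]; rfl
  rw [wvec0] at h0
  have h2 : Real.sqrt (2 * Real.sqrt 2 - 2) = 0 := Complex.ofReal_eq_zero.mp h0
  have h3 : (0:ℝ) < 2 * Real.sqrt 2 - 2 := by
    nlinarith [aux_sqrt2_sq, Real.sqrt_nonneg 2]
  nlinarith [Real.sqrt_pos.mpr h3]

set_option maxHeartbeats 1000000 in
/-- For `T = diag(1, 1+i)` on `ℂ²`, the total antieigenvalue
`|cos| T = inf_{z ≠ 0} |⟨Tz, z⟩|/(‖Tz‖‖z‖)` equals `√(2√2 - 2)`. -/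
theorem total_cos_diag_one_one_add_I
    (T : EuclideanSpace ℂ (Fin 2) →L[ℂ] EuclideanSpace ℂ (Fin 2))
    (hT : ∀ z : EuclideanSpace ℂ (Fin 2), T z = ![z 0, (1 + Complex.I) * z 1]) :
    sInf {r : ℝ | ∃ z : EuclideanSpace ℂ (Fin 2), z ≠ 0 ∧
        r = ‖(inner ℂ (T z) z : ℂ)‖ / (‖T z‖ * ‖z‖)} = Real.sqrt (2 * Real.sqrt 2 - 2) := by
  have hcnn : (0:ℝ) ≤ Real.sqrt (2 * Real.sqrt 2 - 2) := Real.sqrt_nonneg _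
  have hTnorm : ∀ z : EuclideanSpace ℂ (Fin 2),
      ‖T z‖^2 = Complex.normSq (z 0) + 2 * Complex.normSq (z 1) := by
    intro z
    rw [EuclideanSpace.norm_eq, Real.sq_sqrt (by positivity), Fin.sum_univ_two, hT]
    simp only [Matrix.cons_val_zero, Matrix.cons_val_one, Matrix.head_cons,
      norm_mul, mul_pow, Complex.sq_norm, Complex.normSq_apply,
      Complex.add_re, Complex.one_re, Complex.I_re, Complex.add_im, Complex.one_im, Complex.I_im]
    ring
  have hznorm : ∀ z : EuclideanSpace ℂ (Fin 2),
      ‖z‖^2 = Complex.normSq (z 0) + Complex.normSq (z 1) := by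
    intro z
    rw [EuclideanSpace.norm_eq, Real.sq_sqrt (by positivity), Fin.sum_univ_two]
    simp [Complex.sq_norm]
  have hinner : ∀ z : EuclideanSpace ℂ (Fin 2),
      (inner ℂ (T z) z : ℂ) = (Complex.normSq (z 0) : ℂ)
        + (1 - Complex.I) * Complex.normSq (z 1) := by
    intro z
    rw [PiLp.inner_apply, hT]
    simp only [PiLp.inner_apply, Fin.sum_univ_two, RCLike.inner_apply, starRingEnd_apply,
      Matrix.cons_val_zero, Matrix.cons_val_one, Matrix.head_cons]
    have h0 := Complex.mul_conj (z 0)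
    have h1 := Complex.mul_conj (z 1)
    rw [mul_comm, starRingEnd_apply] at h0 h1
    have hs : (star (1 + Complex.I) : ℂ) = 1 - Complex.I := by
      simp [Complex.star_def]; ring
    rw [star_mul, hs]
    linear_combination h0 + (1 - Complex.I) * h1
  have hinnersq : ∀ z : EuclideanSpace ℂ (Fin 2),
      ‖(inner ℂ (T z) z : ℂ)‖^2 = (Complex.normSq (z 0) + Complex.normSq (z 1))^2
        + (Complex.normSq (z 1))^2 := by
    intro z
    rw [Complex.sq_norm, hinner]
    simp [Complex.normSq_apply, Complex.add_re, Complex.add_im, Complex.sub_re, Complex.sub_im,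
      Complex.mul_re, Complex.mul_im, Complex.ofReal_re, Complex.ofReal_im,
      Complex.one_re, Complex.one_im, Complex.I_re, Complex.I_im]
    ring
  -- lower bound
  have hlb : ∀ r ∈ {r : ℝ | ∃ z : EuclideanSpace ℂ (Fin 2), z ≠ 0 ∧
      r = ‖(inner ℂ (T z) z : ℂ)‖ / (‖T z‖ * ‖z‖)},
      Real.sqrt (2 * Real.sqrt 2 - 2) ≤ r := by
    rintro r ⟨z, hz, rfl⟩
    have hsnn : 0 ≤ Complex.normSq (z 0) := Complex.normSq_nonneg _
    have htnn : 0 ≤ Complex.normSq (z 1) := Complex.normSq_nonneg _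
    have hzpos' : 0 < ‖z‖ := norm_pos_iff.mpr hz
    have hzpos : 0 < Complex.normSq (z 0) + Complex.normSq (z 1) := by
      rw [← hznorm z]; positivity
    have hTzpos : 0 < ‖T z‖ := by
      have h1 : (0:ℝ) < ‖T z‖^2 := by rw [hTnorm z]; linarith
      nlinarith [norm_nonneg (T z)]
    have hD : 0 < ‖T z‖ * ‖z‖ := mul_pos hTzpos hzpos'
    rw [le_div_iff₀ hD]
    have hsq : (Real.sqrt (2 * Real.sqrt 2 - 2) * (‖T z‖ * ‖z‖))^2
        ≤ ‖(inner ℂ (T z) z : ℂ)‖^2 := by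
      rw [hinnersq z, mul_pow, mul_pow, hTnorm z, hznorm z, aux_c_sq]
      exact aux_ineq _ _ hsnn htnn
    calc Real.sqrt (2 * Real.sqrt 2 - 2) * (‖T z‖ * ‖z‖)
        = Real.sqrt ((Real.sqrt (2 * Real.sqrt 2 - 2) * (‖T z‖ * ‖z‖))^2) :=
          (Real.sqrt_sq (by positivity)).symm
      _ ≤ Real.sqrt (‖(inner ℂ (T z) z : ℂ)‖^2) := Real.sqrt_le_sqrt hsq
      _ = ‖(inner ℂ (T z) z : ℂ)‖ := Real.sqrt_sq (norm_nonneg _)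
  -- witness value
  have hwval : Real.sqrt (2 * Real.sqrt 2 - 2)
      = ‖(inner ℂ (T wvec) wvec : ℂ)‖ / (‖T wvec‖ * ‖wvec‖) := by
    have hN : ‖(inner ℂ (T wvec) wvec : ℂ)‖^2 = 8 - 4 * Real.sqrt 2 := by
      rw [hinnersq wvec, wvec_s, wvec_t]; nlinarith [aux_sqrt2_sq]
    have hDsq : (‖T wvec‖ * ‖wvec‖)^2 = 2 * Real.sqrt 2 := by
      rw [mul_pow, hTnorm wvec, hznorm wvec, wvec_s, wvec_t]
      nlinarith [aux_sqrt2_sq]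
    have hDpos : 0 < ‖T wvec‖ * ‖wvec‖ := by
      have h1 : 0 < ‖wvec‖ := norm_pos_iff.mpr wvec_ne
      have h2 : 0 < ‖T wvec‖ := by
        have h3 : (0:ℝ) < ‖T wvec‖^2 := by
          rw [hTnorm wvec, wvec_s, wvec_t]; nlinarith [aux_sqrt2_ge]
        nlinarith [norm_nonneg (T wvec)]
      exact mul_pos h2 h1
    rw [eq_div_iff (ne_of_gt hDpos)]
    apply aux_eq_of_sq (by positivity) (norm_nonneg _)
    rw [mul_pow, aux_c_sq, hDsq, hN]; nlinarith [aux_sqrt2_sq]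
  apply le_antisymm
  · exact csInf_le ⟨_, hlb⟩ ⟨wvec, wvec_ne, hwval⟩
  · exact le_csInf ⟨_, wvec, wvec_ne, hwval⟩ hlb
end
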